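/- Let r, u0 be real numbers with |r| < 1. Define u0n, u1n : ℕ → ℝ by u0n(0) = u0, u0n(n+1) = u0 + r·u0n(n), u1n(0) = 0, u1n(n+1) = r·u1n(n) + r·u0n(n)². Then u1n(n) converges as n → ∞, with limit u0²·r/(1−r)³. -/

import Mathlib

theorem stmt_1 (r u0 : ℝ) (hr : |r| < 1)
    (u0n u1n : ℕ → ℝ)
    (h00 : u0n 0 = u0)
    (h0s : ∀ n : ℕ, u0n (n + 1) = u0 + r * u0n n)
    (h10 : u1n 0 = 0)
    (h1s : ∀ n : ℕ, u1n (n + 1) = r * u1n n + r * (u0n n) ^ 2) :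
    Filter.Tendsto u1n Filter.atTop (nhds (u0 ^ 2 * r / (1 - r) ^ 3)) := by
  have hr1 : (1 : ℝ) - r ≠ 0 := sub_ne_zero.mpr (by intro h; rw [← h] at hr; simp at hr)
  have hu0 : ∀ n, u0n n = u0 * (1 - r ^ (n + 1)) / (1 - r) := by
    intro n
    induction n with
    | zero => rw [h00]; field_simp; ring
    | succ k ih =>
      rw [h0s, ih]
      field_simp
      ring
  have hu1 : ∀ n, u1n n = u0 ^ 2 * ((r + r ^ (n + 2)) * (1 - r ^ n)
      - 2 * n * r ^ (n + 1) * (1 - r)) / (1 - r) ^ 3 := by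
    intro n
    induction n with
    | zero => rw [h10]; simp
    | succ k ih =>
      rw [h1s, ih, hu0]
      field_simp
      push_cast
      ring
  refine Filter.Tendsto.congr (fun n => (hu1 n).symm) ?_
  have hpow : Filter.Tendsto (fun n : ℕ => r ^ n) Filter.atTop (nhds 0) :=
    tendsto_pow_atTop_nhds_zero_of_abs_lt_one hr
  have hnpow : Filter.Tendsto (fun n : ℕ => (n : ℝ) * r ^ n) Filter.atTop (nhds 0) :=
    tendsto_self_mul_const_pow_of_abs_lt_one hr
  have h1 : Filter.Tendsto (fun n : ℕ => u0 ^ 2 * ((r + r ^ (n + 2)) * (1 - r ^ n)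
      - 2 * n * r ^ (n + 1) * (1 - r)) / (1 - r) ^ 3) Filter.atTop
      (nhds (u0 ^ 2 * ((r + r ^ 2 * 0) * (1 - 0) - 2 * 0 * r * (1 - r)) / (1 - r) ^ 3)) := by
    apply Filter.Tendsto.div_const
    apply Filter.Tendsto.const_mul
    apply Filter.Tendsto.sub
    · apply Filter.Tendsto.mul
      · apply Filter.Tendsto.const_add
        have : (fun n : ℕ => r ^ (n + 2)) = fun n : ℕ => r ^ 2 * r ^ n := by
          funext n; ring
        rw [this]
        exact (hpow.const_mul _)
      · exact tendsto_const_nhds.sub hpow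
    · have : (fun n : ℕ => 2 * (n : ℝ) * r ^ (n + 1) * (1 - r))
          = fun n : ℕ => 2 * ((n : ℝ) * r ^ n) * r * (1 - r) := by
        funext n; ring
      rw [this]
      have : Filter.Tendsto (fun n : ℕ => 2 * ((n : ℝ) * r ^ n) * r * (1 - r))
          Filter.atTop (nhds (2 * 0 * r * (1 - r))) := by
        exact (((hnpow.const_mul 2).mul_const r).mul_const (1 - r))
      simpa using this
  convert h1 using 2
  ring
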